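/- arXiv:1005.5269 — 2 statements merged into one kernel-verified Lean document; each statement's English description precedes it below -/
import Mathlib

section
/- For any complex numbers a, b (representing f_s and f_t) and real φ' ≠ 0 with s > 0 and J := (1/s)·Im(b·conj(a)) > 0, the inequality (s|a|² + s^{-1}|b|²)/(2 Im(b·conj(a))) ≥ s·φ' + (1 - s²φ'²)·|b|²/(2 s² J) holds, with equality if and only if a = -i·φ'·b. -/
open Complex

private lemma stmt3_aux (x y u v s φ' : ℝ) (hs : 0 < s) (hI : 0 < v * x - u * y) :
    (s * (x ^ 2 + y ^ 2) + s⁻¹ * (u ^ 2 + v ^ 2)) / (2 * (v * x - u * y))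
      - (s * φ' + (1 - s ^ 2 * φ' ^ 2) * (u ^ 2 + v ^ 2)
          / (2 * s ^ 2 * ((1 / s) * (v * x - u * y))))
      = s / (2 * (v * x - u * y)) * ((x - φ' * v) ^ 2 + (y + φ' * u) ^ 2) := by
  have h2 : (v * x - u * y) ≠ 0 := hI.ne'
  have h3 : s ≠ 0 := hs.ne'
  have h2' : x * v - y * u ≠ 0 := by intro h; apply h2; linarith
  field_simp
  ring

/-- pointwise distortion inequality, first form, with equality iff a = -i φ' b. -/
theorem stmt3 (a b : ℂ) (s φ' : ℝ) (hφ : φ' ≠ 0) (hs : 0 < s)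
    (hJ : 0 < (1 / s) * (b * (starRingEnd ℂ) a).im) :
    (s * ‖a‖ ^ 2 + s⁻¹ * ‖b‖ ^ 2) / (2 * (b * (starRingEnd ℂ) a).im)
      ≥ s * φ' + (1 - s ^ 2 * φ' ^ 2) * ‖b‖ ^ 2
          / (2 * s ^ 2 * ((1 / s) * (b * (starRingEnd ℂ) a).im)) ∧
    ((s * ‖a‖ ^ 2 + s⁻¹ * ‖b‖ ^ 2) / (2 * (b * (starRingEnd ℂ) a).im)
      = s * φ' + (1 - s ^ 2 * φ' ^ 2) * ‖b‖ ^ 2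
          / (2 * s ^ 2 * ((1 / s) * (b * (starRingEnd ℂ) a).im))
      ↔ a = -Complex.I * φ' * b) := by
  have hIval : (b * (starRingEnd ℂ) a).im = b.im * a.re - b.re * a.im := by
    simp [Complex.mul_im, Complex.conj_re, Complex.conj_im]; ring
  have hNa : ‖a‖ ^ 2 = a.re ^ 2 + a.im ^ 2 := by
    rw [Complex.sq_norm, Complex.normSq_apply]; ring
  have hNb : ‖b‖ ^ 2 = b.re ^ 2 + b.im ^ 2 := by
    rw [Complex.sq_norm, Complex.normSq_apply]; ring
  rw [hIval] at hJ ⊢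
  rw [hNa, hNb]
  have hI : 0 < b.im * a.re - b.re * a.im := by
    have h1 : 0 < 1 / s := by positivity
    nlinarith [hJ]
  have key := stmt3_aux a.re a.im b.re b.im s φ' hs hI
  have hcoef : 0 < s / (2 * (b.im * a.re - b.re * a.im)) := by positivity
  have hQnn : 0 ≤ (a.re - φ' * b.im) ^ 2 + (a.im + φ' * b.re) ^ 2 := by positivity
  have heqv : a = -Complex.I * ↑φ' * b ↔
      a.re = φ' * b.im ∧ a.im = -(φ' * b.re) := by
    rw [Complex.ext_iff]
    constructor
    · rintro ⟨h1, h2⟩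
      constructor
      · rw [h1]; simp [Complex.mul_re, Complex.mul_im]
      · rw [h2]; simp [Complex.mul_re, Complex.mul_im]
    · rintro ⟨h1, h2⟩
      constructor
      · rw [h1]; simp [Complex.mul_re, Complex.mul_im]
      · rw [h2]; simp [Complex.mul_re, Complex.mul_im]
  constructor
  · nlinarith [mul_nonneg hcoef.le hQnn, key]
  · rw [heqv]
    constructor
    · intro h
      have hQ0 : (a.re - φ' * b.im) ^ 2 + (a.im + φ' * b.re) ^ 2 = 0 := by
        have h0 : s / (2 * (b.im * a.re - b.re * a.im))
            * ((a.re - φ' * b.im) ^ 2 + (a.im + φ' * b.re) ^ 2) = 0 := by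
          rw [← key]; linarith [h]
        exact (mul_eq_zero.mp h0).resolve_left hcoef.ne'
      obtain ⟨hu, hv⟩ := (add_eq_zero_iff_of_nonneg (sq_nonneg _) (sq_nonneg _)).mp hQ0
      have hu' := pow_eq_zero_iff (n := 2) (by norm_num) |>.mp hu
      have hv' := pow_eq_zero_iff (n := 2) (by norm_num) |>.mp hv
      constructor
      · linarith [sub_eq_zero.mp hu']
      · linarith
    · rintro ⟨h1, h2⟩
      have hQ0 : (a.re - φ' * b.im) ^ 2 + (a.im + φ' * b.re) ^ 2 = 0 := by
        rw [h1, h2]; ring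
      rw [hQ0, mul_zero] at key
      linarith [key]
end

section
/- With the hypotheses of the previous statement (r < r', s_n ∈ (τ,σ) solving exp(∫_σ^{s_n} ρ(y)dy/√(y²ρ(y)² - τ²ρ(τ)²)) = r(s_n/τ)^n for each large n), the sequence satisfies lim_{n→∞} n(s_n - τ) = τ·log(r'/r); in particular s_n → τ. -/
open Set intervalIntegral Filter

/-- If s_n ∈ (τ,σ) solves exp(∫_σ^{s_n} ρ/√(y²ρ²-τ²ρ(τ)²)) = r(s_n/τ)^n
for all large n, then n(s_n - τ) → τ log(r'/r); in particular s_n → τ. -/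
theorem stmt18 (τ σ r : ℝ) (hτ : 0 < τ) (hτσ : τ < σ) (hr0 : 0 < r) (hr1 : r < 1)
    (ρ : ℝ → ℝ) (hρc : ContinuousOn ρ (Icc τ σ)) (hρ : ∀ y ∈ Icc τ σ, 0 < ρ y)
    (hmaj : ∀ y ∈ Ioc τ σ, τ ^ 2 * ρ τ ^ 2 < y ^ 2 * ρ y ^ 2)
    (hint : IntervalIntegrable
      (fun y => ρ y / Real.sqrt (y ^ 2 * ρ y ^ 2 - τ ^ 2 * ρ τ ^ 2)) volume σ τ)
    (r' : ℝ)
    (hr' : r' = Real.exp (∫ y in σ..τ,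
      ρ y / Real.sqrt (y ^ 2 * ρ y ^ 2 - τ ^ 2 * ρ τ ^ 2)))
    (hrr' : r < r') (hr'1 : r' < 1)
    (sn : ℕ → ℝ)
    (hsn : ∀ᶠ n : ℕ in atTop, sn n ∈ Ioo τ σ ∧
      Real.exp (∫ y in σ..(sn n), ρ y / Real.sqrt (y ^ 2 * ρ y ^ 2 - τ ^ 2 * ρ τ ^ 2))
        = r * (sn n / τ) ^ n) :
    Tendsto (fun n : ℕ => (n : ℝ) * (sn n - τ)) atTop (nhds (τ * Real.log (r' / r))) ∧
      Tendsto sn atTop (nhds τ) := by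
  set f : ℝ → ℝ := fun y => ρ y / Real.sqrt (y ^ 2 * ρ y ^ 2 - τ ^ 2 * ρ τ ^ 2) with hf
  set F : ℝ → ℝ := fun s => ∫ y in σ..s, f y with hF
  set a : ℕ → ℝ := fun n => Real.log (sn n / τ) with ha
  -- f is nonnegative on [τ, σ]
  have hfnn : ∀ y ∈ Icc τ σ, 0 ≤ f y := fun y hy =>
    div_nonneg (hρ y hy).le (Real.sqrt_nonneg _)
  -- the integrability hypothesis is stated for an arbitrary measure; derive the
  -- real one from hr'1 (otherwise the integral would be the junk value 0 and r' = 1)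
  have hint' : IntervalIntegrable f MeasureTheory.volume σ τ := by
    by_contra h
    apply absurd hr'1
    rw [hr']
    have hempty : Ioc σ τ = (∅ : Set ℝ) := Ioc_eq_empty (not_lt.mpr hτσ.le)
    have h2 : ¬ MeasureTheory.IntegrableOn f (Ioc τ σ) MeasureTheory.volume := by
      intro h3
      exact h ⟨by rw [hempty]; exact MeasureTheory.integrableOn_empty, h3⟩
    rw [intervalIntegral, MeasureTheory.integral_undef h2]
    rw [hempty]
    simp
  -- key identity eventually
  have key : ∀ᶠ n : ℕ in atTop, sn n ∈ Ioo τ σ ∧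
      (n : ℝ) * a n = F (sn n) - Real.log r := by
    filter_upwards [hsn] with n hn
    obtain ⟨hmem, heq⟩ := hn
    refine ⟨hmem, ?_⟩
    have hq : 0 < sn n / τ := div_pos (hτ.trans hmem.1) hτ
    have := congrArg Real.log heq
    rw [Real.log_exp, Real.log_mul (ne_of_gt hr0) (pow_ne_zero _ (ne_of_gt hq)),
      Real.log_pow] at this
    rw [ha]
    simp only [this, hF]
    push_cast
    ring
  -- F (sn n) ≤ 0 eventually
  have hFle : ∀ᶠ n : ℕ in atTop, F (sn n) ≤ 0 := by
    filter_upwards [hsn] with n hn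
    have hmem := hn.1
    rw [hF]
    simp only
    rw [intervalIntegral.integral_symm]
    have : 0 ≤ ∫ y in (sn n)..σ, f y := by
      apply intervalIntegral.integral_nonneg hmem.2.le
      intro u hu
      exact hfnn u ⟨hmem.1.le.trans hu.1, hu.2⟩
    linarith
  -- a n > 0 eventually
  have hapos : ∀ᶠ n : ℕ in atTop, 0 < a n := by
    filter_upwards [hsn] with n hn
    exact Real.log_pos ((one_lt_div hτ).mpr hn.1.1)
  -- a n → 0
  have ha0 : Tendsto a atTop (nhds 0) := by
    apply squeeze_zero' (hapos.mono fun n h => h.le)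
      (g := fun n : ℕ => (-Real.log r) / n)
    · filter_upwards [key, hFle, eventually_ge_atTop 1] with n hk hF0 hn1
      have hnpos : (0:ℝ) < n := by exact_mod_cast hn1
      rw [le_div_iff₀ hnpos]
      have : (n:ℝ) * a n ≤ -Real.log r := by
        rw [hk.2]; linarith
      linarith [this]
    · exact tendsto_const_div_atTop_nhds_zero_nat _
  -- sn → τ
  have hsnτ : Tendsto sn atTop (nhds τ) := by
    have h1 : Tendsto (fun n => τ * Real.exp (a n)) atTop (nhds (τ * Real.exp 0)) :=
      tendsto_const_nhds.mul (Real.continuous_exp.continuousAt.tendsto.comp ha0)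
    rw [Real.exp_zero, mul_one] at h1
    apply h1.congr'
    filter_upwards [hsn] with n hn
    rw [ha]
    simp only
    rw [Real.exp_log (div_pos (hτ.trans hn.1.1) hτ)]
    field_simp
  -- F (sn n) → log r'
  have hFcont : ContinuousWithinAt F (Icc τ σ) τ := by
    apply intervalIntegral.continuousWithinAt_primitive (by simp)
    rw [min_eq_right hτσ.le, max_self]
    exact hint'.symm
  have hFtend : Tendsto (fun n => F (sn n)) atTop (nhds (Real.log r')) := by
    have hFτ : F τ = Real.log r' := by rw [hr', Real.log_exp]
    rw [← hFτ]
    apply hFcont.tendsto.comp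
    rw [tendsto_nhdsWithin_iff]
    exact ⟨hsnτ, hsn.mono fun n hn => ⟨hn.1.1.le, hn.1.2.le⟩⟩
  -- n * a n → log (r'/r)
  have hna : Tendsto (fun n : ℕ => (n : ℝ) * a n) atTop (nhds (Real.log (r' / r))) := by
    have : Tendsto (fun n => F (sn n) - Real.log r) atTop
        (nhds (Real.log r' - Real.log r)) := hFtend.sub tendsto_const_nhds
    rw [Real.log_div (by linarith : r' ≠ 0) (ne_of_gt hr0)]
    exact this.congr' (key.mono fun n hn => hn.2.symm)
  -- slope of exp at 0
  have hslope : Tendsto (fun n => (Real.exp (a n) - 1) / a n) atTop (nhds 1) := by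
    have hd : Tendsto (fun x : ℝ => (Real.exp x - 1) / x) (nhdsWithin 0 {(0:ℝ)}ᶜ)
        (nhds 1) := by
      have h := hasDerivAt_iff_tendsto_slope.mp (Real.hasDerivAt_exp 0)
      rw [Real.exp_zero] at h
      apply h.congr
      intro x
      simp [slope_fun_def, div_eq_mul_inv, mul_comm]
    apply hd.comp
    rw [tendsto_nhdsWithin_iff]
    exact ⟨ha0, hapos.mono fun n h => ne_of_gt h⟩
  -- conclude
  refine ⟨?_, hsnτ⟩
  have hprod : Tendsto (fun n : ℕ => τ * ((Real.exp (a n) - 1) / a n) * ((n : ℝ) * a n))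
      atTop (nhds (τ * 1 * Real.log (r' / r))) :=
    ((tendsto_const_nhds.mul hslope).mul hna)
  rw [mul_one] at hprod
  apply hprod.congr'
  filter_upwards [hsn, hapos] with n hn hap
  have hsneq : sn n = τ * Real.exp (a n) := by
    rw [ha]; simp only
    rw [Real.exp_log (div_pos (hτ.trans hn.1.1) hτ)]
    field_simp
  rw [hsneq]
  field_simp
end
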